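/- Under the assumptions of the previous lemma, any solution (c_k)_{k≥1} of (E_n) equals c_k = α^n_k q_n^{k-1}/f_n'(q_n); in particular (E_n) has a unique solution. -/

import Mathlib

/-- Any solution `(c_k)_{k≥1}` of `(E_n)` equals `c_k = α^n_k q_n^{k-1}/f_n'(q_n)`, where `q_n`
is the unique positive point with `f_n(q_n) = 1`; in particular `(E_n)` has a unique solution. -/
theorem stmt8 (n : ℕ) (hn : 1 ≤ n) (α : ℕ → ℝ) (q f' m0 : ℝ) (c : ℕ → ℝ)
    (hα0 : α 0 = 0) (hα1 : α 1 = 1)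
    (hαr : ∀ k : ℕ, 2 ≤ k →
      (2 + ((k : ℝ) - 1) / (n : ℝ)) * α k = ∑ i ∈ Finset.Ico 1 k, α i * α (k - i))
    (hq : 0 < q)
    (hf : HasSum (fun k : ℕ => α k * q ^ k) 1)
    (huniq : ∀ q' : ℝ, 0 < q' → HasSum (fun k : ℕ => α k * q' ^ k) 1 → q' = q)
    (hf' : HasSum (fun k : ℕ => (k : ℝ) * α k * q ^ (k - 1)) f')
    (hc0 : c 0 = 0) (hcpos : ∀ k, 0 ≤ c k)
    (hm1 : HasSum (fun k : ℕ => (k : ℝ) * c k) 1)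
    (hm0 : HasSum c m0) (hm0pos : 0 < m0)
    (hrec : ∀ k : ℕ, 2 ≤ k →
      (2 + ((k : ℝ) - 1) / (n : ℝ)) * c k = (1 / m0) * ∑ i ∈ Finset.Ico 1 k, c i * c (k - i)) :
    ∀ k : ℕ, 1 ≤ k → c k = α k * q ^ (k - 1) / f' := by
  have hm0ne : m0 ≠ 0 := ne_of_gt hm0pos
  set r := c 1 / m0 with hr_def
  have key : ∀ k, 1 ≤ k → c k = m0 * (α k * r ^ k) := by
    intro k
    induction k using Nat.strong_induction_on with
    | _ k ih =>
      intro hk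
      rcases eq_or_lt_of_le hk with h1 | h2
      · rw [← h1, hα1, hr_def]
        field_simp
      · have hk2 : 2 ≤ k := h2
        have hnpos : (0:ℝ) < n := by exact_mod_cast hn
        have hk1 : (1:ℝ) ≤ (k:ℝ) := by exact_mod_cast hk
        have hcoef : (0:ℝ) < 2 + ((k:ℝ) - 1) / n := by
          have : (0:ℝ) ≤ ((k:ℝ) - 1) / n := div_nonneg (by linarith) (le_of_lt hnpos)
          linarith
        have hsum : ∑ i ∈ Finset.Ico 1 k, c i * c (k - i)
            = m0 ^ 2 * r ^ k * ∑ i ∈ Finset.Ico 1 k, α i * α (k - i) := by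
          rw [Finset.mul_sum]
          refine Finset.sum_congr rfl ?_
          intro i hi
          rw [Finset.mem_Ico] at hi
          have h1i := hi.1
          have hik : i < k := hi.2
          rw [ih i hik h1i, ih (k - i) (by omega) (by omega)]
          have hpow : r ^ i * r ^ (k - i) = r ^ k := by
            rw [← pow_add]; congr 1; omega
          rw [← hpow]; ring
        have h := hrec k hk2
        rw [hsum, ← hαr k hk2] at h
        have h2 : (2 + ((k:ℝ) - 1) / n) * c k
            = (2 + ((k:ℝ) - 1) / n) * (m0 * (α k * r ^ k)) := by
          rw [h]; field_simp
        exact mul_left_cancel₀ (ne_of_gt hcoef) h2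
  have key0 : ∀ k, c k = m0 * (α k * r ^ k) := by
    intro k
    rcases Nat.eq_zero_or_pos k with h | h
    · rw [h, hc0, hα0]; ring
    · exact key k h
  have hc1pos : 0 < c 1 := by
    rcases lt_or_eq_of_le (hcpos 1) with h | h
    · exact h
    · exfalso
      have hr0 : r = 0 := by rw [hr_def, ← h]; simp
      have hz : (fun k : ℕ => (k:ℝ) * c k) = fun _ => 0 := by
        funext k
        rcases Nat.eq_zero_or_pos k with hk | hk
        · rw [hk]; simp
        · rw [key0 k, hr0, zero_pow (by omega : k ≠ 0)]; ring
      rw [hz] at hm1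
      exact one_ne_zero (hm1.unique hasSum_zero)
  have hrpos : 0 < r := div_pos hc1pos hm0pos
  have hs : HasSum (fun k : ℕ => α k * r ^ k) 1 := by
    have h := hm0
    rw [show c = fun k => m0 * (α k * r ^ k) from funext key0] at h
    have h2 := h.mul_left m0⁻¹
    simpa [inv_mul_cancel₀ hm0ne, ← mul_assoc] using h2
  have hrq : r = q := huniq r hrpos hs
  have ck : ∀ k, c k = m0 * (α k * q ^ k) := by
    intro k; rw [key0 k, hrq]
  have heq : 1 = m0 * q * f' := by
    have h1 : (fun k : ℕ => (k:ℝ) * c k)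
        = fun k : ℕ => (m0 * q) * ((k:ℝ) * α k * q ^ (k - 1)) := by
      funext k
      rcases Nat.eq_zero_or_pos k with hk | hk
      · rw [hk]; simp
      · rw [ck k]
        have : q ^ k = q ^ (k - 1) * q := by rw [← pow_succ]; congr 1; omega
        rw [this]; ring
    rw [h1] at hm1
    exact hm1.unique (hf'.mul_left (m0 * q))
  have hf'ne : f' ≠ 0 := by
    intro h; rw [h, mul_zero] at heq; exact one_ne_zero heq
  intro k hk
  rw [ck k, eq_div_iff hf'ne]
  have : q ^ k = q ^ (k - 1) * q := by rw [← pow_succ]; congr 1; omega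
  rw [this]
  linear_combination (-(α k * q ^ (k - 1))) * heq
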